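/- Under the monotonicity condition P(S = n | Y^{n−1}) ≥ P(S = n+1 | Y^n) for all 2 ≤ n ≤ κ, the stopping regions A_n = {y^n : P(S ≤ n | Y^n=y^n) ≥ λP(S=n+1 | Y^n=y^n)} are nested: if y^n ∈ A_n then y^nγ ∈ A_{n+1} for every γ ∈ Y. -/

import Mathlib

open Finset
open scoped Classical

noncomputable section

variable {Ω : Type*} [Fintype Ω] {𝒳 : Type*} {𝒴 : Type*}

/-- Probability of an event under weights `p` on a finite sample space. -/
def prW (p : Ω → ℝ) (A : Ω → Prop) : ℝ := ∑ ω, if A ω then p ω else 0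

/-- Expectation under weights `p`. -/
def exW (p : Ω → ℝ) (f : Ω → ℝ) : ℝ := ∑ ω, p ω * f ω

/-- `p` is a probability weight function. -/
def IsProbW (p : Ω → ℝ) : Prop := (∀ ω, 0 ≤ p ω) ∧ ∑ ω, p ω = 1

/-- Conditional probability `P(A | B)`. -/
def cprW (p : Ω → ℝ) (A B : Ω → Prop) : ℝ := prW p (fun ω => A ω ∧ B ω) / prW p B

/-- Conditional expectation `E(f | B)`. -/
def cexW (p : Ω → ℝ) (f : Ω → ℝ) (B : Ω → Prop) : ℝ :=
  (∑ ω, if B ω then p ω * f ω else 0) / prW p B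

/-- positive part of a real number -/
def posP (x : ℝ) : ℝ := max x 0

/-- `S` is a (non-randomized) stopping time w.r.t. the process `X` (time starts at 1):
its value is determined by the observations up to itself. -/
def IsSTW (X : ℕ → Ω → 𝒳) (S : Ω → ℕ) : Prop :=
  ∀ ω ω', (∀ i, 1 ≤ i → i ≤ S ω → X i ω = X i ω') → S ω' = S ω

/-- The path of the process `Y` at sample `ω`. -/
def pathOf (Y : ℕ → Ω → 𝒴) (ω : Ω) : ℕ → 𝒴 := fun i => Y i ω

/-- The path `f` extends (passes through) the node `y` (a finite string). -/
def ExtN (y : List 𝒴) (f : ℕ → 𝒴) : Prop := ∀ i : Fin y.length, f (i.1 + 1) = y.get i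

/-- A stopping function on paths: its value depends only on the path up to that value.
This is the path-representation of a non-randomized stopping time (a tree). -/
def IsStopFun (t : (ℕ → 𝒴) → ℕ) : Prop :=
  ∀ f g, (∀ i, 1 ≤ i → i ≤ t f → f i = g i) → t g = t f

/-- `y` is an internal node of the tree `t`. -/
def InternalNode (t : (ℕ → 𝒴) → ℕ) (y : List 𝒴) : Prop :=
  ∀ f, ExtN y f → y.length < t f

/-- `u` is (the stopping function of) a subtree rooted at node `y`. -/
def IsSubtreeAt (y : List 𝒴) (u : (ℕ → 𝒴) → ℕ) : Prop :=
  IsStopFun u ∧ ∀ f, ExtN y f → y.length ≤ u f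

/-- false-alarm weight `a(y)` of node `y` -/
def aW (p : Ω → ℝ) (Y : ℕ → Ω → 𝒴) (S : Ω → ℕ) (y : List 𝒴) : ℝ :=
  prW p (fun ω => ExtN y (pathOf Y ω) ∧ y.length < S ω)

/-- delay weight `b(y)` of node `y` -/
def bW (p : Ω → ℝ) (Y : ℕ → Ω → 𝒴) (S : Ω → ℕ) (y : List 𝒴) : ℝ :=
  exW p (fun ω => if ExtN y (pathOf Y ω) then posP ((y.length : ℝ) - (S ω : ℝ)) else 0)

/-- false-alarm weight `a(T_y)` of a subtree `u` rooted at `y` (the sum of `a(γ)`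
over its leaves `γ`). -/
def aSubW (p : Ω → ℝ) (Y : ℕ → Ω → 𝒴) (S : Ω → ℕ) (y : List 𝒴) (u : (ℕ → 𝒴) → ℕ) : ℝ :=
  prW p (fun ω => ExtN y (pathOf Y ω) ∧ u (pathOf Y ω) < S ω)

/-- delay weight `b(T_y)` of a subtree `u` rooted at `y` (the sum of `b(γ)` over its leaves). -/
def bSubW (p : Ω → ℝ) (Y : ℕ → Ω → 𝒴) (S : Ω → ℕ) (y : List 𝒴) (u : (ℕ → 𝒴) → ℕ) : ℝ :=
  exW p (fun ω => if ExtN y (pathOf Y ω) then posP ((u (pathOf Y ω) : ℝ) - (S ω : ℝ)) else 0)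

/-- Lagrangian cost `J_λ(T_y)` of the subtree `u` rooted at `y`. -/
def JsubW (p : Ω → ℝ) (Y : ℕ → Ω → 𝒴) (S : Ω → ℕ) (lam : ℝ) (y : List 𝒴)
    (u : (ℕ → 𝒴) → ℕ) : ℝ :=
  bSubW p Y S y u + lam * aSubW p Y S y u

/-- Lagrangian cost `J_λ(y)` of the single node `y`. -/
def JnodeW (p : Ω → ℝ) (Y : ℕ → Ω → 𝒴) (S : Ω → ℕ) (lam : ℝ) (y : List 𝒴) : ℝ :=
  bW p Y S y + lam * aW p Y S y

/-- `u` is the smallest minimal-cost rooted subtree `T_y(λ)` of `t` at node `y`,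
for Lagrange multiplier `lam`. -/
def IsOptSubtreeAt (p : Ω → ℝ) (Y : ℕ → Ω → 𝒴) (S : Ω → ℕ) (lam : ℝ)
    (t : (ℕ → 𝒴) → ℕ) (y : List 𝒴) (u : (ℕ → 𝒴) → ℕ) : Prop :=
  IsSubtreeAt y u ∧ (∀ f, ExtN y f → u f ≤ t f) ∧
  (∀ v, IsSubtreeAt y v → (∀ f, ExtN y f → v f ≤ t f) →
    JsubW p Y S lam y u ≤ JsubW p Y S lam y v) ∧
  (∀ v, IsSubtreeAt y v → (∀ f, ExtN y f → v f ≤ t f) →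
    JsubW p Y S lam y v = JsubW p Y S lam y u → ∀ f, ExtN y f → u f ≤ v f)

/-- the tradeoff quantity `g(y, T) = (b(T_y) - b(y)) / (a(y) - a(T_y))`
(with the convention 0/0 = 0, which holds automatically for real division). -/
def gW (p : Ω → ℝ) (Y : ℕ → Ω → 𝒴) (S : Ω → ℕ) (t : (ℕ → 𝒴) → ℕ) (y : List 𝒴) : ℝ :=
  (bSubW p Y S y t - bW p Y S y) / (aW p Y S y - aSubW p Y S y t)

/-- node permuted by a coordinate permutation -/
def permNode (y : List 𝒴) (π : Equiv.Perm (Fin y.length)) : List 𝒴 :=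
  List.ofFn fun i => y.get (π i)

/-- permutation invariance of a stopping time w.r.t. process `Y`:
`P(T ≤ n | Y^n = y^n) = P(T ≤ n | Y^n = π(y^n))`. -/
def PermInvST (p : Ω → ℝ) (Y : ℕ → Ω → 𝒴) (T : Ω → ℕ) (κ : ℕ) : Prop :=
  ∀ y : List 𝒴, y.length ≤ κ → ∀ π : Equiv.Perm (Fin y.length),
    cprW p (fun ω => T ω ≤ y.length) (fun ω => ExtN y (pathOf Y ω)) =
    cprW p (fun ω => T ω ≤ y.length) (fun ω => ExtN (permNode y π) (pathOf Y ω))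

/-- the pairs `(X_i, Y_i)` are i.i.d. (over the first `κ` time steps). -/
def IIDPairs [Fintype 𝒳] [Fintype 𝒴] (p : Ω → ℝ) (X : ℕ → Ω → 𝒳) (Y : ℕ → Ω → 𝒴)
    (κ : ℕ) : Prop :=
  ∃ μ : 𝒳 × 𝒴 → ℝ, (∀ z, 0 ≤ μ z) ∧ (∑ z, μ z = 1) ∧
    ∀ (x : ℕ → 𝒳) (yf : ℕ → 𝒴),
      prW p (fun ω => ∀ i, 1 ≤ i → i ≤ κ → X i ω = x i ∧ Y i ω = yf i) =
        ∏ i ∈ Finset.Icc 1 κ, μ (x i, yf i)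

/-- a randomized stopping time bounded by `κ`, given by its conditional stopping
kernel `q n y^n = P(T = n | Y^n = y^n)`. -/
def IsRandST (q : ℕ → (ℕ → 𝒴) → ℝ) (κ : ℕ) : Prop :=
  (∀ n f, 0 ≤ q n f) ∧
  (∀ n f g, (∀ i, 1 ≤ i → i ≤ n → f i = g i) → q n g = q n f) ∧
  (∀ f, ∑ n ∈ Finset.Icc 1 κ, q n f = 1)

/-- false-alarm probability `P(T < S)` of a randomized stopping time -/
def faR (p : Ω → ℝ) (Y : ℕ → Ω → 𝒴) (S : Ω → ℕ) (κ : ℕ) (q : ℕ → (ℕ → 𝒴) → ℝ) : ℝ :=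
  exW p (fun ω => ∑ n ∈ Finset.Icc 1 κ, q n (pathOf Y ω) * (if n < S ω then 1 else 0))

/-- expected reaction delay `E(T - S)⁺` of a randomized stopping time -/
def delayR (p : Ω → ℝ) (Y : ℕ → Ω → 𝒴) (S : Ω → ℕ) (κ : ℕ) (q : ℕ → (ℕ → 𝒴) → ℝ) : ℝ :=
  exW p (fun ω => ∑ n ∈ Finset.Icc 1 κ, q n (pathOf Y ω) * posP ((n : ℝ) - (S ω : ℝ)))

/-- the optimal tradeoff curve `d(α)` -/
def dW (p : Ω → ℝ) (Y : ℕ → Ω → 𝒴) (S : Ω → ℕ) (κ : ℕ) (α : ℝ) : ℝ :=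
  sInf {v | ∃ q, IsRandST q κ ∧ faR p Y S κ q ≤ α ∧ v = delayR p Y S κ q}

/-- the stopping kernel of a non-randomized stopping function -/
def detKer (t : (ℕ → 𝒴) → ℕ) : ℕ → (ℕ → 𝒴) → ℝ := fun n f => if t f = n then 1 else 0

/-- prefix of length `n` of a path (the node of depth `n` it visits) -/
def prefixOf (f : ℕ → 𝒴) (n : ℕ) : List 𝒴 := (List.range n).map fun i => f (i + 1)

/-- the one-step-lookahead node cost `c(y^n)` -/
def cnodeW (p : Ω → ℝ) (Y : ℕ → Ω → 𝒴) (S : Ω → ℕ) (lam : ℝ) (y : List 𝒴) : ℝ :=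
  cexW p (fun ω => posP ((y.length : ℝ) - (S ω : ℝ))) (fun ω => ExtN y (pathOf Y ω)) +
    lam * cprW p (fun ω => y.length < S ω) (fun ω => ExtN y (pathOf Y ω))

end

section AuxLemmas
open Finset
open scoped Classical

variable {Ω : Type*} [Fintype Ω] {𝒳 : Type*} {𝒴 : Type*}

lemma prW_nonneg (p : Ω → ℝ) (hp0 : ∀ ω, 0 ≤ p ω) (A : Ω → Prop) : 0 ≤ prW p A :=
  Finset.sum_nonneg fun ω _ => by split_ifs; exacts [hp0 ω, le_refl 0]

lemma prW_mono (p : Ω → ℝ) (hp0 : ∀ ω, 0 ≤ p ω) {A B : Ω → Prop} (h : ∀ ω, A ω → B ω) :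
    prW p A ≤ prW p B :=
  Finset.sum_le_sum fun ω _ => by
    split_ifs with h1 h2
    · exact le_refl _
    · exact absurd (h ω h1) h2
    · exact hp0 ω
    · exact le_refl _

lemma prW_congr (p : Ω → ℝ) {A B : Ω → Prop} (h : ∀ ω, A ω ↔ B ω) : prW p A = prW p B :=
  Finset.sum_congr rfl fun ω _ => by rw [if_congr (h ω) rfl rfl]

lemma extN_append (y : List 𝒴) (γ : 𝒴) (f : ℕ → 𝒴) :
    ExtN (y ++ [γ]) f ↔ ExtN y f ∧ f (y.length + 1) = γ := by
  constructor
  · intro h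
    refine ⟨fun i => ?_, ?_⟩
    · have hi : (i.1 : ℕ) < (y ++ [γ]).length := by simp
      have := h ⟨i.1, hi⟩
      simpa [List.get_eq_getElem, List.getElem_append_left i.2] using this
    · have hl : y.length < (y ++ [γ]).length := by simp
      have := h ⟨y.length, hl⟩
      simpa [List.get_eq_getElem, List.getElem_concat_length (l := y) (a := γ) (i := y.length) rfl] using this
  · rintro ⟨h1, h2⟩ i
    by_cases hi : (i.1 : ℕ) < y.length
    · have := h1 ⟨i.1, hi⟩
      simpa [List.get_eq_getElem, List.getElem_append_left hi] using this
    · have hlen : (i.1 : ℕ) = y.length := by have := i.2; simp at this; omega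
      simp [List.get_eq_getElem, List.getElem_concat_length (l := y) (a := γ) (i := i.1) hlen, hlen, h2]

lemma sum2_ite_congr {A B : Type*} [Fintype A] [Fintype B] {P Q : A → B → Prop}
    {iP : ∀ a b, Decidable (P a b)} {iQ : ∀ a b, Decidable (Q a b)}
    (h : ∀ a b, P a b ↔ Q a b) (f : A → B → ℝ) :
    (∑ a, ∑ b, @ite ℝ (P a b) (iP a b) (f a b) 0)
      = ∑ a, ∑ b, @ite ℝ (Q a b) (iQ a b) (f a b) 0 :=
  Finset.sum_congr rfl fun a _ => Finset.sum_congr rfl fun b _ => by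
    split_ifs with h1 h2
    · rfl
    · exact absurd ((h a b).1 h1) h2
    · next h2 => exact absurd ((h a b).2 h2) h1
    · rfl

end AuxLemmas

section AuxLemmas2
open Finset
open scoped Classical

lemma sum_factor {𝒳 𝒴 : Type*} [Fintype 𝒳] [Fintype 𝒴] {κ : ℕ} (μ : 𝒳 × 𝒴 → ℝ)
    (hμ1 : ∑ z, μ z = 1)
    (C : (Fin κ → 𝒳) → (Fin κ → 𝒴) → Prop) (m : Fin κ)
    (hC : ∀ xv yv a b, C (Function.update xv m a) (Function.update yv m b) ↔ C xv yv)
    (γ : 𝒴) :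
    (∑ xv : Fin κ → 𝒳, ∑ yv : Fin κ → 𝒴,
        if C xv yv ∧ yv m = γ then ∏ i, μ (xv i, yv i) else 0)
      = (∑ xv : Fin κ → 𝒳, ∑ yv : Fin κ → 𝒴,
          if C xv yv then ∏ i, μ (xv i, yv i) else 0) * (∑ x, μ (x, γ)) := by
  classical
  set F : ((Fin κ → 𝒳) × (Fin κ → 𝒴)) × 𝒳 × 𝒴 → ℝ := fun z =>
    if C z.1.1 z.1.2 ∧ z.1.2 m = γ then (∏ i, μ (z.1.1 i, z.1.2 i)) * μ z.2 else 0 with hF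
  set G : ((Fin κ → 𝒳) × (Fin κ → 𝒴)) × 𝒳 × 𝒴 → ℝ := fun z =>
    if C z.1.1 z.1.2 ∧ z.2.2 = γ then (∏ i, μ (z.1.1 i, z.1.2 i)) * μ z.2 else 0 with hG
  have flat : ∀ H : ((Fin κ → 𝒳) × (Fin κ → 𝒴)) × 𝒳 × 𝒴 → ℝ,
      ∑ z, H z = ∑ xv : Fin κ → 𝒳, ∑ yv : Fin κ → 𝒴, ∑ ab : 𝒳 × 𝒴, H ((xv, yv), ab) := by
    intro H
    rw [Fintype.sum_prod_type, Fintype.sum_prod_type]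
  -- the surgery involution
  set e : ((Fin κ → 𝒳) × (Fin κ → 𝒴)) × 𝒳 × 𝒴 → ((Fin κ → 𝒳) × (Fin κ → 𝒴)) × 𝒳 × 𝒴 :=
    fun z => ((Function.update z.1.1 m z.2.1, Function.update z.1.2 m z.2.2),
      (z.1.1 m, z.1.2 m)) with he
  have hinv : Function.Involutive e := by
    rintro ⟨⟨xv, yv⟩, a, b⟩
    simp only [he, Function.update_self, Function.update_idem, Function.update_eq_self]
  have hprodsplit : ∀ (xv : Fin κ → 𝒳) (yv : Fin κ → 𝒴),
      (∏ i, μ (xv i, yv i)) = μ (xv m, yv m) * ∏ i ∈ univ.erase m, μ (xv i, yv i) :=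
    fun xv yv => (Finset.mul_prod_erase univ _ (mem_univ m)).symm
  have hFG : ∑ z, G z = ∑ z, F z := by
    refine Fintype.sum_bijective e hinv.bijective G F ?_
    rintro ⟨⟨xv, yv⟩, a, b⟩
    simp only [hF, hG, he, Function.update_self]
    rw [if_congr (and_congr (hC xv yv a b) Iff.rfl) rfl rfl]
    by_cases hc : C xv yv ∧ b = γ
    · rw [if_pos hc, if_pos hc]
      have herase : (∏ i ∈ univ.erase m,
          μ (Function.update xv m a i, Function.update yv m b i))
          = ∏ i ∈ univ.erase m, μ (xv i, yv i) :=
        Finset.prod_congr rfl fun i hi => by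
          rw [Function.update_of_ne (Finset.ne_of_mem_erase hi),
            Function.update_of_ne (Finset.ne_of_mem_erase hi)]
      rw [hprodsplit xv yv, hprodsplit (Function.update xv m a) (Function.update yv m b),
        Function.update_self, Function.update_self, herase]
      ring
    · rw [if_neg hc, if_neg hc]
  have hLHS : (∑ xv : Fin κ → 𝒳, ∑ yv : Fin κ → 𝒴,
      if C xv yv ∧ yv m = γ then ∏ i, μ (xv i, yv i) else 0) = ∑ z, F z := by
    rw [flat F]
    refine Finset.sum_congr rfl fun xv _ => Finset.sum_congr rfl fun yv _ => ?_
    by_cases hc : C xv yv ∧ yv m = γ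
    · rw [if_pos hc]
      have hterm : ∀ ab : 𝒳 × 𝒴, F ((xv, yv), ab) = (∏ i, μ (xv i, yv i)) * μ ab :=
        fun ab => by simp only [hF]; rw [if_pos hc]
      rw [Finset.sum_congr rfl fun ab _ => hterm ab, ← Finset.mul_sum, hμ1, mul_one]
    · rw [if_neg hc]
      refine (Finset.sum_eq_zero fun ab _ => ?_).symm
      simp only [hF]; rw [if_neg hc]
  have hRHS : (∑ xv : Fin κ → 𝒳, ∑ yv : Fin κ → 𝒴,
      if C xv yv then ∏ i, μ (xv i, yv i) else 0) * (∑ x, μ (x, γ)) = ∑ z, G z := by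
    rw [flat G, Finset.sum_mul]
    refine Finset.sum_congr rfl fun xv _ => ?_
    rw [Finset.sum_mul]
    refine Finset.sum_congr rfl fun yv _ => ?_
    by_cases hc : C xv yv
    · rw [if_pos hc]
      have hterm : ∀ ab : 𝒳 × 𝒴, G ((xv, yv), ab) =
          if ab.2 = γ then (∏ i, μ (xv i, yv i)) * μ ab else 0 := fun ab => by
        simp only [hG]
        by_cases h2 : ab.2 = γ
        · rw [if_pos ⟨hc, h2⟩, if_pos h2]
        · rw [if_neg (fun hh => h2 hh.2), if_neg h2]
      rw [Finset.sum_congr rfl fun ab _ => hterm ab, Fintype.sum_prod_type]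
      rw [Finset.sum_congr rfl fun a (_ : a ∈ univ) =>
        (Finset.sum_ite_eq' univ γ (fun b => (∏ i, μ (xv i, yv i)) * μ (a, b)))]
      rw [Finset.mul_sum]
      exact Finset.sum_congr rfl fun a _ => by rw [if_pos (mem_univ γ)]
    · rw [if_neg hc, zero_mul]
      refine (Finset.sum_eq_zero fun ab _ => ?_).symm
      simp only [hG]; rw [if_neg (fun hh => hc hh.1)]
  rw [hLHS, hRHS, hFG]

end AuxLemmas2

section AuxLemmas3
open Finset
open scoped Classical

/-- extend a finite vector to a function on `ℕ` (time starts at 1) -/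
noncomputable def liftFn {α : Type*} [Nonempty α] {κ : ℕ} (v : Fin κ → α) : ℕ → α :=
  fun i => if h : i - 1 < κ then v ⟨i - 1, h⟩ else Classical.arbitrary α

lemma liftFn_succ {α : Type*} [Nonempty α] {κ : ℕ} (v : Fin κ → α) (j : Fin κ) :
    liftFn v (j.1 + 1) = v j := by
  have h : j.1 + 1 - 1 < κ := by omega
  simp [liftFn]

lemma prW_eq_sum {Ω : Type*} [Fintype Ω] {𝒳 𝒴 : Type*} [Fintype 𝒳] [Fintype 𝒴]
    [Nonempty 𝒳] [Nonempty 𝒴]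
    (p : Ω → ℝ) (X : ℕ → Ω → 𝒳) (Y : ℕ → Ω → 𝒴) {κ : ℕ} (μ : 𝒳 × 𝒴 → ℝ)
    (hprod : ∀ (x : ℕ → 𝒳) (yf : ℕ → 𝒴),
      prW p (fun ω => ∀ i, 1 ≤ i → i ≤ κ → X i ω = x i ∧ Y i ω = yf i) =
        ∏ i ∈ Finset.Icc 1 κ, μ (x i, yf i))
    (E : Ω → Prop) (Ehat : (Fin κ → 𝒳) → (Fin κ → 𝒴) → Prop)
    (hE : ∀ ω, E ω ↔ Ehat (fun j => X (j.1 + 1) ω) (fun j => Y (j.1 + 1) ω)) :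
    prW p E = ∑ xv : Fin κ → 𝒳, ∑ yv : Fin κ → 𝒴,
      if Ehat xv yv then ∏ i, μ (xv i, yv i) else 0 := by
  classical
  -- step 1: per-trajectory probability
  have h1 : ∀ (xv : Fin κ → 𝒳) (yv : Fin κ → 𝒴),
      prW p (fun ω => (∀ j : Fin κ, X (j.1 + 1) ω = xv j) ∧
        (∀ j : Fin κ, Y (j.1 + 1) ω = yv j)) = ∏ i, μ (xv i, yv i) := by
    intro xv yv
    have hev : ∀ ω, ((∀ j : Fin κ, X (j.1 + 1) ω = xv j) ∧
        (∀ j : Fin κ, Y (j.1 + 1) ω = yv j)) ↔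
        (∀ i, 1 ≤ i → i ≤ κ → X i ω = liftFn xv i ∧ Y i ω = liftFn yv i) := by
      intro ω
      constructor
      · rintro ⟨hx, hy⟩ i h1i hiκ
        have hj : i - 1 < κ := by omega
        have hi' : (⟨i - 1, hj⟩ : Fin κ).1 + 1 = i := by simp; omega
        constructor
        · rw [← hi', liftFn_succ, hx]
        · rw [← hi', liftFn_succ, hy]
      · intro h
        constructor
        · intro j
          have := (h (j.1 + 1) (by omega) (by omega)).1
          rw [this, liftFn_succ]
        · intro j
          have := (h (j.1 + 1) (by omega) (by omega)).2
          rw [this, liftFn_succ]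
    rw [prW_congr p hev, hprod]
    -- reindex the product
    have : ∏ i ∈ Finset.Icc 1 κ, μ (liftFn xv i, liftFn yv i)
        = ∏ j ∈ Finset.range κ, μ (liftFn xv (j + 1), liftFn yv (j + 1)) := by
      refine Finset.prod_nbij' (fun i => i - 1) (fun j => j + 1) ?_ ?_ ?_ ?_ ?_
      · intro i hi; simp only [Finset.mem_Icc] at hi; simp only [Finset.mem_range]; omega
      · intro j hj; simp only [Finset.mem_range] at hj; simp only [Finset.mem_Icc]; omega
      · intro i hi; simp only [Finset.mem_Icc] at hi; omega
      · intro j hj; omega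
      · intro i hi; simp only [Finset.mem_Icc] at hi
        have hi1 : i - 1 + 1 = i := by omega
        rw [hi1]
    rw [this, ← Fin.prod_univ_eq_prod_range (fun j => μ (liftFn xv (j + 1), liftFn yv (j + 1))) κ]
    exact Finset.prod_congr rfl fun j _ => by rw [liftFn_succ, liftFn_succ]
  -- step 2: each term of the RHS is a prW
  have h2 : ∀ (xv : Fin κ → 𝒳) (yv : Fin κ → 𝒴),
      (if Ehat xv yv then ∏ i, μ (xv i, yv i) else 0)
        = prW p (fun ω => E ω ∧ (∀ j : Fin κ, X (j.1 + 1) ω = xv j) ∧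
            (∀ j : Fin κ, Y (j.1 + 1) ω = yv j)) := by
    intro xv yv
    by_cases hc : Ehat xv yv
    · rw [if_pos hc, ← h1 xv yv]
      refine prW_congr p fun ω => ?_
      constructor
      · rintro ⟨hx, hy⟩
        refine ⟨?_, hx, hy⟩
        rw [hE ω]
        have hfx : (fun j : Fin κ => X (j.1 + 1) ω) = xv := funext hx
        have hfy : (fun j : Fin κ => Y (j.1 + 1) ω) = yv := funext hy
        rw [hfx, hfy]; exact hc
      · rintro ⟨_, h⟩; exact h
    · rw [if_neg hc]
      refine (Finset.sum_eq_zero fun ω _ => ?_).symm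
      rw [if_neg]
      rintro ⟨hEω, hx, hy⟩
      apply hc
      have hfx : (fun j : Fin κ => X (j.1 + 1) ω) = xv := funext hx
      have hfy : (fun j : Fin κ => Y (j.1 + 1) ω) = yv := funext hy
      rw [← hfx, ← hfy]
      exact (hE ω).1 hEω
  -- step 3: sum over all trajectories
  have h3 : ∀ ω, (∑ xv : Fin κ → 𝒳, ∑ yv : Fin κ → 𝒴,
      if E ω ∧ (∀ j : Fin κ, X (j.1 + 1) ω = xv j) ∧
        (∀ j : Fin κ, Y (j.1 + 1) ω = yv j) then p ω else 0)
      = if E ω then p ω else 0 := by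
    intro ω
    have inner : ∀ xv : Fin κ → 𝒳, (∑ yv : Fin κ → 𝒴,
        if E ω ∧ (∀ j : Fin κ, X (j.1 + 1) ω = xv j) ∧
          (∀ j : Fin κ, Y (j.1 + 1) ω = yv j) then p ω else 0)
        = if E ω ∧ (∀ j : Fin κ, X (j.1 + 1) ω = xv j) then p ω else 0 := by
      intro xv
      rw [Finset.sum_eq_single_of_mem (fun j : Fin κ => Y (j.1 + 1) ω) (mem_univ _)]
      · by_cases hc : E ω ∧ (∀ j : Fin κ, X (j.1 + 1) ω = xv j)
        · rw [if_pos ⟨hc.1, hc.2, fun j => rfl⟩, if_pos hc]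
        · rw [if_neg (fun hh => hc ⟨hh.1, hh.2.1⟩), if_neg hc]
      · intro yv _ hne
        rw [if_neg]
        rintro ⟨_, _, hy⟩
        exact hne (funext fun j => (hy j).symm)
    rw [Finset.sum_congr rfl fun xv (_ : xv ∈ univ) => inner xv]
    rw [Finset.sum_eq_single_of_mem (fun j : Fin κ => X (j.1 + 1) ω) (mem_univ _)]
    · by_cases hc : E ω
      · rw [if_pos ⟨hc, fun j => rfl⟩, if_pos hc]
      · rw [if_neg (fun hh => hc hh.1), if_neg hc]
    · intro xv _ hne
      rw [if_neg]
      rintro ⟨_, hx⟩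
      exact hne (funext fun j => (hx j).symm)
  have hstep : (∑ xv : Fin κ → 𝒳, ∑ yv : Fin κ → 𝒴,
      prW p (fun ω => E ω ∧ (∀ j : Fin κ, X (j.1 + 1) ω = xv j) ∧
        (∀ j : Fin κ, Y (j.1 + 1) ω = yv j))) = prW p E := by
    unfold prW
    refine (Finset.sum_congr rfl fun xv (_ : xv ∈ univ) =>
      Finset.sum_comm).trans (Finset.sum_comm.trans
        (Finset.sum_congr rfl fun ω (_ : ω ∈ univ) =>
          (Finset.sum_congr rfl fun xv _ => Finset.sum_congr rfl fun yv _ =>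
            ite_congr rfl (fun _ => rfl) fun _ => rfl).trans (h3 ω)))
  rw [Finset.sum_congr rfl fun xv (_ : xv ∈ univ) =>
    Finset.sum_congr rfl fun yv (_ : yv ∈ univ) => h2 xv yv]
  exact hstep.symm

end AuxLemmas3


/-- under the monotonicity condition
`P(S = n | Y^{n-1}) ≥ P(S = n+1 | Y^n)` for all `2 ≤ n ≤ κ`, the one-step-lookahead
stopping regions `A_n = {y^n : P(S ≤ n|Y^n=y^n) ≥ λ P(S=n+1|Y^n=y^n)}` are nested:
`y^n ∈ A_n` implies `y^nγ ∈ A_{n+1}` for every `γ`. -/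
theorem lookahead_regions_nested
    {Ω 𝒳 𝒴 : Type*} [Fintype Ω] [Fintype 𝒳] [Fintype 𝒴]
    (p : Ω → ℝ) (hp : IsProbW p) (X : ℕ → Ω → 𝒳) (Y : ℕ → Ω → 𝒴) (κ : ℕ)
    (hiid : IIDPairs p X Y κ)
    (S : Ω → ℕ) (hS : IsSTW X S) (hSb : ∀ ω, 1 ≤ S ω ∧ S ω ≤ κ)
    (lam : ℝ) (hlam : 0 ≤ lam)
    (hmono : ∀ n : ℕ, 2 ≤ n → n ≤ κ → ∀ y : List 𝒴, y.length = n - 1 → ∀ γ : 𝒴,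
      cprW p (fun ω => S ω = n + 1) (fun ω => ExtN (y ++ [γ]) (pathOf Y ω)) ≤
        cprW p (fun ω => S ω = n) (fun ω => ExtN y (pathOf Y ω))) :
    ∀ y : List 𝒴, 1 ≤ y.length → y.length < κ →
      lam * cprW p (fun ω => S ω = y.length + 1) (fun ω => ExtN y (pathOf Y ω)) ≤
        cprW p (fun ω => S ω ≤ y.length) (fun ω => ExtN y (pathOf Y ω)) →
      ∀ γ : 𝒴,
        lam * cprW p (fun ω => S ω = (y ++ [γ]).length + 1)
            (fun ω => ExtN (y ++ [γ]) (pathOf Y ω)) ≤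
          cprW p (fun ω => S ω ≤ (y ++ [γ]).length)
            (fun ω => ExtN (y ++ [γ]) (pathOf Y ω)) := by
  classical
  obtain ⟨hp0, hp1⟩ := hp
  obtain ⟨μ, hμ0, hμ1, hprod⟩ := hiid
  intro y hy1 hyκ hA γ
  simp only [List.length_append, List.length_singleton]
  by_cases hpos : prW p (fun ω => ExtN (y ++ [γ]) (pathOf Y ω)) = 0
  · unfold cprW
    rw [hpos, div_zero, div_zero, mul_zero]
  · -- positive probability of the extended node
    have hgpos : 0 < prW p (fun ω => ExtN (y ++ [γ]) (pathOf Y ω)) :=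
      lt_of_le_of_ne (prW_nonneg p hp0 _) (Ne.symm hpos)
    have hsub : ∀ ω, ExtN (y ++ [γ]) (pathOf Y ω) → ExtN y (pathOf Y ω) :=
      fun ω h => ((extN_append y γ (pathOf Y ω)).1 h).1
    have hypos : 0 < prW p (fun ω => ExtN y (pathOf Y ω)) :=
      lt_of_lt_of_le hgpos (prW_mono p hp0 hsub)
    have hΩ : Nonempty Ω := by
      by_contra h
      haveI : IsEmpty Ω := not_nonempty_iff.mp h
      apply hpos
      unfold prW
      rw [Finset.univ_eq_empty, Finset.sum_empty]
    haveI : Nonempty 𝒳 := ⟨X 1 (Classical.arbitrary Ω)⟩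
    haveI : Nonempty 𝒴 := ⟨Y 1 (Classical.arbitrary Ω)⟩
    set n := y.length with hn
    have hnκ : n < κ := hyκ
    set m : Fin κ := ⟨n, hnκ⟩ with hm
    -- trajectory predicates
    set C0 : (Fin κ → 𝒳) → (Fin κ → 𝒴) → Prop := fun xv yv =>
      ∀ i : Fin y.length, yv ⟨i.1, lt_of_lt_of_le i.2 hnκ.le⟩ = y.get i with hC0
    set SC : (Fin κ → 𝒳) → Prop := fun xv =>
      ∀ ω', (∀ j : Fin κ, j.1 < n → X (j.1 + 1) ω' = xv j) → S ω' ≤ n with hSC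
    -- S ω ≤ n is determined by the X-trajectory
    have hSdet : ∀ ω, S ω ≤ n ↔ SC (fun j : Fin κ => X (j.1 + 1) ω) := by
      intro ω
      constructor
      · intro h ω' hag
        have heq : S ω' = S ω := by
          apply hS ω ω'
          intro i h1i hiS
          have hj : i - 1 < n := by omega
          have h3 : X (i - 1 + 1) ω' = X (i - 1 + 1) ω := hag ⟨i - 1, by omega⟩ hj
          have hi1 : i - 1 + 1 = i := by omega
          rw [hi1] at h3
          exact h3.symm
        omega
      · intro h
        exact h ω fun j hj => rfl
    -- update invariance
    have hC0up : ∀ xv yv a b,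
        C0 (Function.update xv m a) (Function.update yv m b) ↔ C0 xv yv := by
      intro xv yv a b
      refine forall_congr' fun i => ?_
      have hne : (⟨i.1, lt_of_lt_of_le i.2 hnκ.le⟩ : Fin κ) ≠ m :=
        Fin.ne_of_val_ne (Nat.ne_of_lt i.2)
      rw [Function.update_of_ne hne]
    have hSCup : ∀ (xv : Fin κ → 𝒳) a, SC (Function.update xv m a) ↔ SC xv := by
      intro xv a
      constructor
      · intro h ω' hag
        apply h ω'
        intro j hj
        have hne : j ≠ m := Fin.ne_of_val_ne (Nat.ne_of_lt hj)
        rw [Function.update_of_ne hne]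
        exact hag j hj
      · intro h ω' hag
        apply h ω'
        intro j hj
        have h3 := hag j hj
        have hne : j ≠ m := Fin.ne_of_val_ne (Nat.ne_of_lt hj)
        rwa [Function.update_of_ne hne] at h3
    -- the four prW-to-sum identities
    have hE0 : ∀ ω, ExtN y (pathOf Y ω) ↔
        C0 (fun j : Fin κ => X (j.1 + 1) ω) (fun j : Fin κ => Y (j.1 + 1) ω) :=
      fun ω => Iff.rfl
    have hE0' : ∀ ω, ExtN (y ++ [γ]) (pathOf Y ω) ↔
        (C0 (fun j : Fin κ => X (j.1 + 1) ω) (fun j : Fin κ => Y (j.1 + 1) ω) ∧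
          (fun j : Fin κ => Y (j.1 + 1) ω) m = γ) := by
      intro ω
      rw [extN_append]
      exact Iff.rfl
    have hE1 : ∀ ω, (S ω ≤ n ∧ ExtN y (pathOf Y ω)) ↔
        (SC (fun j : Fin κ => X (j.1 + 1) ω) ∧
          C0 (fun j : Fin κ => X (j.1 + 1) ω) (fun j : Fin κ => Y (j.1 + 1) ω)) :=
      fun ω => and_congr (hSdet ω) (hE0 ω)
    have hE1' : ∀ ω, (S ω ≤ n ∧ ExtN (y ++ [γ]) (pathOf Y ω)) ↔
        ((SC (fun j : Fin κ => X (j.1 + 1) ω) ∧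
          C0 (fun j : Fin κ => X (j.1 + 1) ω) (fun j : Fin κ => Y (j.1 + 1) ω)) ∧
          (fun j : Fin κ => Y (j.1 + 1) ω) m = γ) := by
      intro ω
      rw [hE0' ω, and_congr (hSdet ω) Iff.rfl]
      tauto
    have key0 := prW_eq_sum p X Y μ hprod (fun ω => ExtN y (pathOf Y ω)) C0 hE0
    have key0' := prW_eq_sum p X Y μ hprod (fun ω => ExtN (y ++ [γ]) (pathOf Y ω))
      (fun xv yv => C0 xv yv ∧ yv m = γ) hE0'
    have key1 := prW_eq_sum p X Y μ hprod (fun ω => S ω ≤ n ∧ ExtN y (pathOf Y ω))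
      (fun xv yv => SC xv ∧ C0 xv yv) hE1
    have key1' := prW_eq_sum p X Y μ hprod
      (fun ω => S ω ≤ n ∧ ExtN (y ++ [γ]) (pathOf Y ω))
      (fun xv yv => (SC xv ∧ C0 xv yv) ∧ yv m = γ) hE1'
    have fact0 := sum_factor μ hμ1 C0 m hC0up γ
    have fact1 := sum_factor μ hμ1 (fun xv yv => SC xv ∧ C0 xv yv) m
      (fun xv yv a b => and_congr (hSCup xv a) (hC0up xv yv a b)) γ
    have hI : prW p (fun ω => ExtN (y ++ [γ]) (pathOf Y ω))
        = prW p (fun ω => ExtN y (pathOf Y ω)) * (∑ x, μ (x, γ)) := by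
      rw [key0', key0]
      exact (sum2_ite_congr (fun a b => Iff.rfl) _).trans fact0
    have hII : prW p (fun ω => S ω ≤ n ∧ ExtN (y ++ [γ]) (pathOf Y ω))
        = prW p (fun ω => S ω ≤ n ∧ ExtN y (pathOf Y ω)) * (∑ x, μ (x, γ)) := by
      rw [key1', key1]
      refine ((sum2_ite_congr (fun a b => Iff.rfl) _).trans fact1).trans ?_
      exact congrArg (· * ∑ x, μ (x, γ)) (sum2_ite_congr (fun a b => Iff.rfl) _)
    have hmγ : (∑ x, μ (x, γ)) ≠ 0 := by
      intro h0
      rw [h0, mul_zero] at hI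
      exact hpos hI
    -- transfer the conditional probability along the extension
    have h3eq : cprW p (fun ω => S ω ≤ n) (fun ω => ExtN y (pathOf Y ω))
        = cprW p (fun ω => S ω ≤ n) (fun ω => ExtN (y ++ [γ]) (pathOf Y ω)) := by
      unfold cprW
      rw [hI, hII, mul_div_mul_right _ _ hmγ]
    have h4 : cprW p (fun ω => S ω ≤ n) (fun ω => ExtN (y ++ [γ]) (pathOf Y ω))
        ≤ cprW p (fun ω => S ω ≤ n + 1) (fun ω => ExtN (y ++ [γ]) (pathOf Y ω)) := by
      unfold cprW
      exact (div_le_div_iff_of_pos_right hgpos).2 (prW_mono p hp0 fun ω h => ⟨by omega, h.2⟩)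
    have hm1 := hmono (n + 1) (by omega) (by omega) y (by omega) γ
    calc lam * cprW p (fun ω => S ω = n + 1 + 1) (fun ω => ExtN (y ++ [γ]) (pathOf Y ω))
        ≤ lam * cprW p (fun ω => S ω = n + 1) (fun ω => ExtN y (pathOf Y ω)) :=
          mul_le_mul_of_nonneg_left hm1 hlam
      _ ≤ cprW p (fun ω => S ω ≤ n) (fun ω => ExtN y (pathOf Y ω)) := hA
      _ = cprW p (fun ω => S ω ≤ n) (fun ω => ExtN (y ++ [γ]) (pathOf Y ω)) := h3eq
      _ ≤ cprW p (fun ω => S ω ≤ n + 1) (fun ω => ExtN (y ++ [γ]) (pathOf Y ω)) := h4
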